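/- Let V be a complex vector space of even dimension 2m and let Q be a nondegenerate quadratic form on V. Then the Clifford algebra Cl(V,Q) is isomorphic, as a ℂ-algebra, to the algebra of 2^m × 2^m complex matrices; in particular Cl(V,Q) ≅ End(S) for a complex vector space S of dimension 2^m (the spinor module). -/

import Mathlib

open CliffordAlgebra

noncomputable section

variable {M : Type*} [AddCommGroup M] [Module ℂ M] {k : ℕ}
  (Q : QuadraticForm ℂ M) (b : Module.Basis (Fin k) ℂ M)

/-- product of ι of basis vectors along a list -/
def prodι (l : List (Fin k)) : CliffordAlgebra Q :=
  (l.map fun i => ι Q (b i)).prod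

lemma prodι_nil : prodι Q b [] = 1 := rfl
lemma prodι_cons (j : Fin k) (l : List (Fin k)) :
    prodι Q b (j :: l) = ι Q (b j) * prodι Q b l := by
  simp [prodι]

/-- sorting a strictly sorted list's toFinset gives it back -/
lemma sort_toFinset_of_sorted (l : List (Fin k)) (hl : l.Pairwise (· < ·)) :
    (l.toFinset.sort (· ≤ ·)) = l := by
  refine List.Perm.eq_of_pairwise' (Finset.pairwise_sort _ _) (hl.imp le_of_lt) ?_
  refine List.perm_of_nodup_nodup_toFinset_eq (Finset.sort_nodup _ _) hl.nodup ?_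
  rw [Finset.sort_toFinset]

def spanSub (A : Finset (Fin k)) : Submodule ℂ (CliffordAlgebra Q) :=
  Submodule.span ℂ ((fun s : Finset (Fin k) => prodι Q b (s.sort (· ≤ ·))) ''
    {s | s ⊆ A})

lemma spanSub_mono {A B : Finset (Fin k)} (h : A ⊆ B) : spanSub Q b A ≤ spanSub Q b B :=
  Submodule.span_mono (Set.image_mono fun _ hs => hs.trans h)

lemma mem_spanSub_of_subset {s A : Finset (Fin k)} (h : s ⊆ A) :
    prodι Q b (s.sort (· ≤ ·)) ∈ spanSub Q b A :=
  Submodule.subset_span ⟨s, h, rfl⟩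

lemma ι_mul_spanSub {j : Fin k} {A : Finset (Fin k)} (hA : ∀ a ∈ A, j < a)
    {x : CliffordAlgebra Q} (hx : x ∈ spanSub Q b A) :
    ι Q (b j) * x ∈ spanSub Q b (insert j A) := by
  induction hx using Submodule.span_induction with
  | mem x hx =>
    obtain ⟨s, hs, rfl⟩ := hx
    have hjs : ∀ a ∈ s, j < a := fun a ha => hA a (hs ha)
    have hj : j ∉ s := fun h => lt_irrefl j (hjs j h)
    have : ι Q (b j) * prodι Q b (s.sort (· ≤ ·)) =
        prodι Q b ((insert j s).sort (· ≤ ·)) := by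
      rw [Finset.sort_insert _ (fun a ha => (hjs a ha).le) hj, prodι_cons]
    rw [this]
    exact mem_spanSub_of_subset Q b (Finset.insert_subset_insert _ hs)
  | zero => simp
  | add x y _ _ hx hy => rw [mul_add]; exact add_mem hx hy
  | smul c x _ hx => rw [mul_smul_comm]; exact Submodule.smul_mem _ _ hx

lemma key (l : List (Fin k)) (hl : l.Pairwise (· < ·)) (i : Fin k) :
    ι Q (b i) * prodι Q b l ∈ spanSub Q b (insert i l.toFinset) := by
  induction l generalizing i with
  | nil =>
    have : ι Q (b i) = prodι Q b (({i} : Finset (Fin k)).sort (· ≤ ·)) := by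
      simp [prodι]
    rw [prodι_nil, mul_one, this]
    exact mem_spanSub_of_subset Q b (by simp)
  | cons j t ih =>
    have hjt : ∀ x ∈ t, j < x := fun x hx => List.rel_of_pairwise_cons hl hx
    have ht : t.Pairwise (· < ·) := hl.of_cons
    rcases lt_trichotomy i j with hij | hij | hij
    · -- i < j : i :: j :: t is strictly sorted
      have hsorted : (i :: j :: t).Pairwise (· < ·) := by
        refine List.pairwise_cons.2 ⟨?_, hl⟩
        intro x hx
        rcases List.mem_cons.1 hx with rfl | hx
        · exact hij
        · exact hij.trans (hjt x hx)
      have heq : prodι Q b (i :: j :: t) = ι Q (b i) * prodι Q b (j :: t) :=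
        prodι_cons Q b i (j :: t)
      rw [← heq, ← sort_toFinset_of_sorted _ hsorted]
      refine mem_spanSub_of_subset Q b ?_
      simp
    · -- i = j
      subst hij
      rw [prodι_cons, ← mul_assoc, ι_sq_scalar, ← Algebra.smul_def]
      refine Submodule.smul_mem _ _ ?_
      have := mem_spanSub_of_subset Q b (le_refl t.toFinset)
      rw [sort_toFinset_of_sorted t ht] at this
      exact spanSub_mono Q b (by intro x hx; simp [hx]) this
    · -- j < i
      have swap : ι Q (b i) * ι Q (b j) =
          algebraMap ℂ _ (QuadraticMap.polar Q (b i) (b j)) - ι Q (b j) * ι Q (b i) :=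
        CliffordAlgebra.ι_mul_ι_comm _ _
      rw [prodι_cons, ← mul_assoc, swap, sub_mul, mul_assoc]
      refine sub_mem ?_ ?_
      · rw [Algebra.smul_def (QuadraticMap.polar Q (b i) (b j)) _ |>.symm]
        refine Submodule.smul_mem _ _ ?_
        have := mem_spanSub_of_subset Q b (le_refl t.toFinset)
        rw [sort_toFinset_of_sorted t ht] at this
        exact spanSub_mono Q b (by intro x hx; simp [hx]) this
      · have hi := ih ht i
        have h2 : ∀ a ∈ insert i t.toFinset, j < a := by
          intro a ha
          rcases Finset.mem_insert.1 ha with rfl | ha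
          · exact hij
          · exact hjt a (List.mem_toFinset.1 ha)
        have := ι_mul_spanSub Q b h2 hi
        refine spanSub_mono Q b ?_ this
        intro x hx
        simp at hx ⊢
        rcases hx with rfl | rfl | hx <;> simp [*]

end
noncomputable section

variable {M : Type*} [AddCommGroup M] [Module ℂ M] {k : ℕ}
  (Q : QuadraticForm ℂ M) (b : Module.Basis (Fin k) ℂ M)

lemma mul_mem_spanSub_univ (x : CliffordAlgebra Q) :
    ∀ y ∈ spanSub Q b Finset.univ, x * y ∈ spanSub Q b Finset.univ := by
  induction x using CliffordAlgebra.induction with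
  | algebraMap r =>
    intro y hy
    rw [Algebra.algebraMap_eq_smul_one, smul_mul_assoc, one_mul]
    exact Submodule.smul_mem _ _ hy
  | ι v =>
    intro y hy
    induction hy using Submodule.span_induction with
    | mem y hy =>
      obtain ⟨s, -, rfl⟩ := hy
      have hv : ι Q v = ∑ i, b.repr v i • ι Q (b i) := by
        conv_lhs => rw [← b.sum_repr v]
        rw [map_sum]; simp_rw [map_smul]
      rw [hv, Finset.sum_mul]
      refine Submodule.sum_mem _ fun i _ => ?_
      rw [smul_mul_assoc]
      refine Submodule.smul_mem _ _ ?_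
      have := key Q b (s.sort (· ≤ ·)) (List.sortedLT_iff_pairwise.1 (Finset.sortedLT_sort s)) i
      exact spanSub_mono Q b (Finset.subset_univ _) this
    | zero => simp
    | add a c _ _ ha hc => rw [mul_add]; exact add_mem ha hc
    | smul c a _ ha => rw [mul_smul_comm]; exact Submodule.smul_mem _ _ ha
  | mul a c ha hc => intro y hy; rw [mul_assoc]; exact ha _ (hc _ hy)
  | add a c ha hc => intro y hy; rw [add_mul]; exact add_mem (ha _ hy) (hc _ hy)

lemma spanSub_univ_eq_top : spanSub Q b Finset.univ = ⊤ := by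
  rw [Submodule.eq_top_iff']
  intro x
  have h1 : (1 : CliffordAlgebra Q) ∈ spanSub Q b Finset.univ := by
    have := mem_spanSub_of_subset Q b (Finset.empty_subset (Finset.univ : Finset (Fin k)))
    simpa [prodι] using this
  simpa using mul_mem_spanSub_univ Q b x 1 h1

lemma span_range_prodι :
    Submodule.span ℂ (Set.range fun s : Finset (Fin k) =>
      prodι Q b (s.sort (· ≤ ·))) = ⊤ := by
  rw [← top_le_iff, ← spanSub_univ_eq_top Q b]
  refine Submodule.span_mono ?_
  rintro x ⟨s, -, rfl⟩
  exact ⟨s, rfl⟩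

lemma cliffordSurjLinear :
    Function.Surjective (Fintype.linearCombination ℂ
      (fun s : Finset (Fin k) => prodι Q b (s.sort (· ≤ ·)))) := by
  rw [← LinearMap.range_eq_top, Fintype.range_linearCombination, span_range_prodι]

lemma clFD (b : Module.Basis (Fin k) ℂ M) : FiniteDimensional ℂ (CliffordAlgebra Q) :=
  Module.Finite.of_surjective _ (cliffordSurjLinear Q b)

lemma cl_finrank_le (b : Module.Basis (Fin k) ℂ M) : Module.finrank ℂ (CliffordAlgebra Q) ≤ 2 ^ k := by
  haveI := clFD Q b
  have h := LinearMap.finrank_range_le (Fintype.linearCombination ℂ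
      (fun s : Finset (Fin k) => prodι Q b (s.sort (· ≤ ·))))
  rw [LinearMap.range_eq_top.2 (cliffordSurjLinear Q b), finrank_top] at h
  simpa [Fintype.card_finset] using h

end


open CliffordAlgebra Matrix Complex

noncomputable section

abbrev Qn (n : ℕ) : QuadraticForm ℂ (Fin n → ℂ) :=
  QuadraticMap.weightedSumSquares ℂ (1 : Fin n → ℂ)

lemma Qn_apply (n : ℕ) (v : Fin n → ℂ) : Qn n v = ∑ i, v i * v i := by
  simp [QuadraticMap.weightedSumSquares_apply]

variable (n : ℕ)

/-- single-entry matrix as a linear map -/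
def entryLM (A : Type*) [AddCommMonoid A] [Module ℂ A] (i j : Fin 2) :
    A →ₗ[ℂ] Matrix (Fin 2) (Fin 2) A where
  toFun := Matrix.single i j
  map_add' a b := Matrix.single_add i j a b
  map_smul' c a := (Matrix.smul_single c i j a).symm

abbrev Cl (n : ℕ) := CliffordAlgebra (Qn n)

def ιπ : (Fin (n + 2) → ℂ) →ₗ[ℂ] Cl n :=
  (ι (Qn n)).comp (LinearMap.funLeft ℂ ℂ fun i => i.castSucc.castSucc)

def c0 : Fin (n + 2) := ⟨n, by omega⟩
def c1 : Fin (n + 2) := ⟨n + 1, by omega⟩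

def offd (s : ℂ) : (Fin (n + 2) → ℂ) →ₗ[ℂ] Cl n :=
  (Algebra.linearMap ℂ (Cl n)).comp
    (LinearMap.proj (c0 n) + s • LinearMap.proj (c1 n))

def θ : (Fin (n + 2) → ℂ) →ₗ[ℂ] Matrix (Fin 2) (Fin 2) (Cl n) :=
  (entryLM (Cl n) 0 0).comp (ιπ n) - (entryLM (Cl n) 1 1).comp (ιπ n)
    + (entryLM (Cl n) 0 1).comp (offd n (-Complex.I))
    + (entryLM (Cl n) 1 0).comp (offd n Complex.I)

lemma θ_apply (v : Fin (n + 2) → ℂ) :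
    θ n v = !![ιπ n v, algebraMap ℂ _ (v (c0 n) - Complex.I * v (c1 n));
               algebraMap ℂ _ (v (c0 n) + Complex.I * v (c1 n)), - ιπ n v] := by
  ext i j
  fin_cases i <;> fin_cases j <;>
    simp [θ, entryLM, offd, Matrix.single, sub_eq_add_neg, mul_comm]

lemma sum_split (v : Fin (n + 2) → ℂ) :
    Qn (n+2) v = Qn n (fun i => v i.castSucc.castSucc)
      + (v (c0 n) * v (c0 n) + v (c1 n) * v (c1 n)) := by
  simp only [Qn_apply, Fin.sum_univ_castSucc]
  have h1 : Fin.last (n+1) = c1 n := rfl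
  have h2 : (Fin.last n).castSucc = c0 n := rfl
  rw [h1, h2]
  ring

lemma hc (x y : ℂ) : (x - Complex.I * y) * (x + Complex.I * y) = x * x + y * y := by
  linear_combination (-(y * y) : ℂ) * Complex.I_sq

lemma θ_sq (v : Fin (n + 2) → ℂ) :
    θ n v * θ n v = algebraMap ℂ (Matrix (Fin 2) (Fin 2) (Cl n)) (Qn (n+2) v) := by
  have hι : ιπ n v * ιπ n v = algebraMap ℂ (Cl n) (Qn n (fun i => v i.castSucc.castSucc)) := by
    simpa [ιπ, LinearMap.funLeft, Function.comp_def] using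
      ι_sq_scalar (Qn n) (fun i => v i.castSucc.castSucc)
  rw [θ_apply, Matrix.mul_fin_two]
  ext i j
  fin_cases i <;> fin_cases j <;> simp [Matrix.algebraMap_matrix_apply]
  · rw [hι]
    simp only [← _root_.map_mul, ← _root_.map_sub, ← _root_.map_add, ← map_sum]
    congr 1
    linear_combination hc (v (c0 n)) (v (c1 n)) - sum_split n v + Qn_apply (n+2) v
  · rw [← _root_.map_mul, ← _root_.map_sub, Algebra.commutes, add_neg_cancel]
  · rw [← _root_.map_mul, ← _root_.map_add, Algebra.commutes, add_neg_cancel]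
  · rw [hι]
    simp only [← _root_.map_mul, ← _root_.map_sub, ← _root_.map_add, ← map_sum]
    congr 1
    linear_combination hc (v (c0 n)) (v (c1 n)) - sum_split n v + Qn_apply (n+2) v

def F : CliffordAlgebra (Qn (n+2)) →ₐ[ℂ] Matrix (Fin 2) (Fin 2) (Cl n) :=
  CliffordAlgebra.lift (Qn (n+2)) ⟨θ n, θ_sq n⟩

lemma F_ι (v : Fin (n + 2) → ℂ) : F n (ι (Qn (n+2)) v) = θ n v :=
  CliffordAlgebra.lift_ι_apply _ _ _


lemma ιπ_apply (v : Fin (n + 2) → ℂ) :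
    ιπ n v = ι (Qn n) (fun i => v i.castSucc.castSucc) := rfl

def Xm : Matrix (Fin 2) (Fin 2) (Cl n) := !![0, 1; 1, 0]
def Ym : Matrix (Fin 2) (Fin 2) (Cl n) :=
  !![0, algebraMap ℂ _ (-Complex.I); algebraMap ℂ _ Complex.I, 0]
def σ₃ : Matrix (Fin 2) (Fin 2) (Cl n) := !![1, 0; 0, -1]

lemma ne_c0 (i : Fin n) : i.castSucc.castSucc ≠ c0 n := by
  simp only [Fin.ne_iff_vne, Fin.coe_castSucc, c0]
  omega

lemma ne_c1 (i : Fin n) : i.castSucc.castSucc ≠ c1 n := by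
  simp only [Fin.ne_iff_vne, Fin.coe_castSucc, c1]
  omega

lemma c0_ne_c1 : c0 n ≠ c1 n := by simp [Fin.ne_iff_vne, c0, c1]

lemma X_mem : Xm n ∈ (F n).range := by
  have h0 : (fun i : Fin n => (Pi.single (c0 n) (1:ℂ) : Fin (n+2) → ℂ) i.castSucc.castSucc) = 0 := by
    funext i; exact Pi.single_eq_of_ne (ne_c0 n i) 1
  have hF : F n (ι (Qn (n+2)) (Pi.single (c0 n) 1)) = Xm n := by
    rw [F_ι, θ_apply, ιπ_apply, h0]
    simp [Xm, Pi.single_eq_of_ne (Ne.symm (c0_ne_c1 n))]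
  exact ⟨_, hF⟩

lemma Y_mem : Ym n ∈ (F n).range := by
  have h0 : (fun i : Fin n => (Pi.single (c1 n) (1:ℂ) : Fin (n+2) → ℂ) i.castSucc.castSucc) = 0 := by
    funext i; exact Pi.single_eq_of_ne (ne_c1 n i) 1
  have hF : F n (ι (Qn (n+2)) (Pi.single (c1 n) 1)) = Ym n := by
    rw [F_ι, θ_apply, ιπ_apply, h0]
    simp [Ym, Pi.single_eq_of_ne (c0_ne_c1 n)]
  exact ⟨_, hF⟩

def ext0 (w : Fin n → ℂ) : Fin (n + 2) → ℂ :=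
  fun i => if h : (i : ℕ) < n then w ⟨i, h⟩ else 0

lemma D_mem (w : Fin n → ℂ) :
    (!![ι (Qn n) w, 0; 0, - ι (Qn n) w] : Matrix (Fin 2) (Fin 2) (Cl n)) ∈ (F n).range := by
  have hF : F n (ι (Qn (n+2)) (ext0 n w)) = !![ι (Qn n) w, 0; 0, - ι (Qn n) w] := by
    rw [F_ι, θ_apply, ιπ_apply]
    have h0 : (fun i : Fin n => ext0 n w i.castSucc.castSucc) = w := by
      funext i
      simp [ext0, i.isLt]
    have h1 : ext0 n w (c0 n) = 0 := by simp [ext0, c0]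
    have h2 : ext0 n w (c1 n) = 0 := by simp [ext0, c1]
    rw [h0, h1, h2]
    simp
  exact ⟨_, hF⟩

lemma σ₃_mem : σ₃ n ∈ (F n).range := by
  have h : σ₃ n = (-Complex.I) • (Xm n * Ym n) := by
    ext i j
    fin_cases i <;> fin_cases j <;>
      simp [σ₃, Xm, Ym, Matrix.mul_apply, Fin.sum_univ_two,
        Algebra.algebraMap_eq_smul_one, smul_smul, Complex.I_mul_I]
  rw [h]
  exact Subalgebra.smul_mem _ (mul_mem (X_mem n) (Y_mem n)) _

lemma diag_mem (x : Cl n) :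
    Matrix.diagonal (fun _ => x) ∈ (F n).range := by
  induction x using CliffordAlgebra.induction with
  | algebraMap r =>
    have : (Matrix.diagonal (fun _ => algebraMap ℂ (Cl n) r) : Matrix (Fin 2) (Fin 2) (Cl n))
        = algebraMap ℂ _ r := by
      ext i j
      by_cases h : i = j <;> simp [Matrix.algebraMap_matrix_apply, Matrix.diagonal_apply, h]
    rw [this]
    exact Subalgebra.algebraMap_mem _ r
  | ι w =>
    have h : Matrix.diagonal (fun _ => ι (Qn n) w) = σ₃ n * !![ι (Qn n) w, 0; 0, - ι (Qn n) w] := by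
      ext i j
      fin_cases i <;> fin_cases j <;>
        simp [σ₃, Matrix.mul_apply, Fin.sum_univ_two, Matrix.diagonal]
    rw [h]
    exact mul_mem (σ₃_mem n) (D_mem n w)
  | mul a c ha hc =>
    have h : (Matrix.diagonal (fun _ => a * c) : Matrix (Fin 2) (Fin 2) (Cl n))
        = Matrix.diagonal (fun _ => a) * Matrix.diagonal (fun _ => c) := by
      rw [Matrix.diagonal_mul_diagonal]
    rw [h]; exact mul_mem ha hc
  | add a c ha hc =>
    have h : (Matrix.diagonal (fun _ => a + c) : Matrix (Fin 2) (Fin 2) (Cl n))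
        = Matrix.diagonal (fun _ => a) + Matrix.diagonal (fun _ => c) := by
      rw [Matrix.diagonal_add]
    rw [h]; exact add_mem ha hc

lemma E_mem (i j : Fin 2) : Matrix.single i j (1 : Cl n) ∈ (F n).range := by
  have h1 : (1 : Matrix (Fin 2) (Fin 2) (Cl n)) ∈ (F n).range := one_mem _
  have hE00 : Matrix.single (0:Fin 2) 0 (1 : Cl n) = (2⁻¹:ℂ) • (1 + σ₃ n) := by
    ext a b
    fin_cases a <;> fin_cases b <;>
      simp [σ₃, Matrix.single, Matrix.vecHead, Matrix.vecTail, Matrix.one_apply] <;> module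
  have h00 : Matrix.single (0:Fin 2) 0 (1 : Cl n) ∈ (F n).range := by
    rw [hE00]; exact Subalgebra.smul_mem _ (add_mem h1 (σ₃_mem n)) _
  fin_cases i <;> fin_cases j
  · exact h00
  · show Matrix.single (0:Fin 2) 1 (1 : Cl n) ∈ (F n).range
    have : Matrix.single (0:Fin 2) 1 (1 : Cl n) = Matrix.single 0 0 1 * Xm n := by
      ext a b
      fin_cases a <;> fin_cases b <;>
        simp [Xm, Matrix.single, Matrix.vecHead, Matrix.vecTail, Matrix.mul_apply, Fin.sum_univ_two]
    rw [this]; exact mul_mem h00 (X_mem n)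
  · show Matrix.single (1:Fin 2) 0 (1 : Cl n) ∈ (F n).range
    have : Matrix.single (1:Fin 2) 0 (1 : Cl n) = Xm n * Matrix.single 0 0 1 := by
      ext a b
      fin_cases a <;> fin_cases b <;>
        simp [Xm, Matrix.single, Matrix.vecHead, Matrix.vecTail, Matrix.mul_apply, Fin.sum_univ_two]
    rw [this]; exact mul_mem (X_mem n) h00
  · show Matrix.single (1:Fin 2) 1 (1 : Cl n) ∈ (F n).range
    have : Matrix.single (1:Fin 2) 1 (1 : Cl n) = Xm n * Matrix.single 0 0 1 * Xm n := by
      ext a b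
      fin_cases a <;> fin_cases b <;>
        simp [Xm, Matrix.single, Matrix.vecHead, Matrix.vecTail, Matrix.mul_apply, Fin.sum_univ_two]
    rw [this]; exact mul_mem (mul_mem (X_mem n) h00) (X_mem n)

lemma std_mem (i j : Fin 2) (x : Cl n) : Matrix.single i j x ∈ (F n).range := by
  have h : Matrix.single i j x
      = Matrix.single i 0 (1 : Cl n) * Matrix.diagonal (fun _ => x) * Matrix.single 0 j 1 := by
    ext a b
    fin_cases i <;> fin_cases j <;> fin_cases a <;> fin_cases b <;>
      simp [Matrix.single, Matrix.vecHead, Matrix.vecTail, Matrix.mul_apply, Fin.sum_univ_two, Matrix.diagonal]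
  rw [h]
  exact mul_mem (mul_mem (E_mem n i 0) (diag_mem n x)) (E_mem n 0 j)

lemma F_surj : Function.Surjective (F n) := by
  intro M
  have : M ∈ (F n).range := by
    rw [Matrix.matrix_eq_sum_single M]
    exact sum_mem fun i _ => sum_mem fun j _ => std_mem n i j (M i j)
  exact this

end


noncomputable section

namespace CliffordStmt2

open Matrix

/-- ℂ ≃ₐ 1×1 matrices -/
def e1 : Matrix (Fin 1) (Fin 1) ℂ ≃ₐ[ℂ] ℂ where
  toFun M := M 0 0
  invFun c := Matrix.diagonal fun _ => c
  left_inv M := by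
    ext i j
    fin_cases i <;> fin_cases j <;> simp [Matrix.diagonal]
  right_inv c := by simp [Matrix.diagonal]
  map_mul' M N := by simp [Matrix.mul_apply]
  map_add' M N := by simp
  commutes' c := by simp [Matrix.algebraMap_matrix_apply]

def f0 : CliffordAlgebra (Qn 0) →ₐ[ℂ] ℂ :=
  CliffordAlgebra.lift (Qn 0) ⟨0, fun v => by simp [Qn_apply]⟩

lemma f0_surj : Function.Surjective (f0) := fun c => ⟨algebraMap ℂ _ c, by simp⟩

lemma mapMatrix_surj {A B : Type*} [Semiring A] [Semiring B] [Algebra ℂ A] [Algebra ℂ B]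
    (f : A →ₐ[ℂ] B) (hf : Function.Surjective f) {N : ℕ} :
    Function.Surjective (f.mapMatrix (m := Fin N)) := by
  intro M
  refine ⟨Matrix.of fun i j => (hf (M i j)).choose, ?_⟩
  ext i j
  exact (hf (M i j)).choose_spec

lemma surj_exists (m : ℕ) :
    ∃ f : CliffordAlgebra (Qn (2*m)) →ₐ[ℂ] Matrix (Fin (2^m)) (Fin (2^m)) ℂ,
      Function.Surjective f := by
  induction m with
  | zero =>
    exact ⟨(e1.symm.toAlgHom).comp f0, (e1.symm.surjective).comp f0_surj⟩
  | succ m ih =>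
    obtain ⟨f, hf⟩ := ih
    rw [show 2*(m+1) = 2*m+2 by ring, show (2:ℕ)^(m+1) = 2*2^m by ring]
    refine ⟨(((Matrix.reindexAlgEquiv ℂ ℂ finProdFinEquiv).toAlgHom.comp
      (Matrix.compAlgEquiv (Fin 2) (Fin (2^m)) ℂ ℂ).toAlgHom).comp
      f.mapMatrix).comp (F (2*m)), ?_⟩
    exact ((Matrix.reindexAlgEquiv ℂ ℂ finProdFinEquiv).surjective.comp
      ((Matrix.compAlgEquiv (Fin 2) (Fin (2^m)) ℂ ℂ).surjective.comp
        ((mapMatrix_surj f hf).comp (F_surj (2*m)))))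

lemma equiv_exists (m : ℕ) :
    Nonempty (CliffordAlgebra (Qn (2*m)) ≃ₐ[ℂ] Matrix (Fin (2^m)) (Fin (2^m)) ℂ) := by
  obtain ⟨f, hf⟩ := surj_exists m
  haveI : FiniteDimensional ℂ (CliffordAlgebra (Qn (2*m))) :=
    clFD (Qn (2*m)) (Pi.basisFun ℂ (Fin (2*m)))
  have h1 : Module.finrank ℂ (CliffordAlgebra (Qn (2*m))) ≤ 2 ^ (2*m) :=
    cl_finrank_le (Qn (2*m)) (Pi.basisFun ℂ (Fin (2*m)))
  have h2 : Module.finrank ℂ (Matrix (Fin (2^m)) (Fin (2^m)) ℂ) = 2 ^ (2*m) := by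
    rw [Module.finrank_matrix]
    simp [Fintype.card_fin]
    ring
  have h3 : Module.finrank ℂ (Matrix (Fin (2^m)) (Fin (2^m)) ℂ)
      ≤ Module.finrank ℂ (CliffordAlgebra (Qn (2*m))) := by
    have := LinearMap.finrank_range_le f.toLinearMap
    rwa [LinearMap.range_eq_top.2 (show Function.Surjective f.toLinearMap from hf), finrank_top] at this
  have heq : Module.finrank ℂ (CliffordAlgebra (Qn (2*m)))
      = Module.finrank ℂ (Matrix (Fin (2^m)) (Fin (2^m)) ℂ) :=
    le_antisymm (h2 ▸ h1) h3
  have hinj : Function.Injective f :=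
    (LinearMap.injective_iff_surjective_of_finrank_eq_finrank
      (f := f.toLinearMap) heq).2 hf
  exact ⟨AlgEquiv.ofBijective f ⟨hinj, hf⟩⟩

end CliffordStmt2

theorem stmt2 (V : Type) [AddCommGroup V] [Module ℂ V] [FiniteDimensional ℂ V]
    (m : ℕ) (hdim : Module.finrank ℂ V = 2 * m)
    (Q : QuadraticForm ℂ V) (hQ : (QuadraticMap.polarBilin Q).Nondegenerate) :
    Nonempty (CliffordAlgebra Q ≃ₐ[ℂ] Matrix (Fin (2 ^ m)) (Fin (2 ^ m)) ℂ) ∧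
      ∃ (S : Type) (_ : AddCommGroup S) (_ : Module ℂ S),
        Module.finrank ℂ S = 2 ^ m ∧ Nonempty (CliffordAlgebra Q ≃ₐ[ℂ] Module.End ℂ S) := by
  have hsep : (QuadraticMap.associated (R := ℂ) Q).SeparatingLeft := by
    intro x hx
    refine hQ.1 x fun y => ?_
    have h2 : (2 • QuadraticMap.associatedHom ℂ Q) = Q.polarBilin :=
      QuadraticMap.two_nsmul_associated ℂ Q
    rw [← h2]
    simp only [LinearMap.smul_apply]
    rw [show (QuadraticMap.associatedHom ℂ) Q = QuadraticMap.associated Q from rfl, hx y,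
      smul_zero]
  obtain ⟨e⟩ := QuadraticForm.equivalent_sum_squares Q hsep
  rw [hdim] at e
  have equiv1 : CliffordAlgebra Q ≃ₐ[ℂ] CliffordAlgebra (Qn (2*m)) :=
    CliffordAlgebra.equivOfIsometry e
  obtain ⟨e2⟩ := CliffordStmt2.equiv_exists m
  have emain : CliffordAlgebra Q ≃ₐ[ℂ] Matrix (Fin (2 ^ m)) (Fin (2 ^ m)) ℂ :=
    equiv1.trans e2
  refine ⟨⟨emain⟩, (Fin (2^m) → ℂ), inferInstance, inferInstance, Module.finrank_fin_fun ℂ, ?_⟩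
  exact ⟨emain.trans (algEquivMatrix (Pi.basisFun ℂ (Fin (2^m)))).symm⟩

end
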